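/- Let K ∈ End*_𝒜(H) and let {Λᵢ}_{i∈I} be a ∗-K-g-frame for H whose frame operator S, given by Sf = ∑_{i∈I} Λᵢ*Λᵢ f, is invertible in End*_𝒜(H). Then the family {Λᵢ ∘ S⁻¹K}_{i∈I} is a dual ∗-K-g-frame for {Λᵢ}_{i∈I}; in particular, Kf = ∑_{i∈I} Λᵢ*(Λᵢ S⁻¹ K f) for every f ∈ H. -/

import Mathlib

open scoped RightActions

/-- The `CStarModule` class as in the older Mathlib (right `𝓐`-action via `𝓐ᵐᵒᵖ`, inner product
`𝓐`-linear on the right); current Mathlib's `CStarModule` uses a left action instead. -/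
class CStarModuleRight (A E : Type*) [NonUnitalSemiring A] [StarRing A]
    [Module ℂ A] [AddCommGroup E] [Module ℂ E] [PartialOrder A] [SMul Aᵐᵒᵖ E] [Norm A] [Norm E]
    extends Inner A E where
  inner_add_right {x} {y} {z} : inner x (y + z) = inner x y + inner x z
  inner_self_nonneg {x} : 0 ≤ inner x x
  inner_self {x} : inner x x = 0 ↔ x = 0
  inner_op_smul_right {a : A} {x y : E} : inner x (y <• a) = inner x y * a
  inner_smul_right_complex {z : ℂ} {x} {y} : inner x (z • y) = z • inner x y
  star_inner x y : star (inner x y) = inner y x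
  norm_eq_sqrt_norm_inner_self x : ‖x‖ = √‖inner x x‖

namespace CSMR

section

variable {A : Type*} [CStarAlgebra A] [PartialOrder A]
variable {E : Type*} [NormedAddCommGroup E] [NormedSpace ℂ E] [SMul Aᵐᵒᵖ E]
    [CStarModuleRight A E]

lemma star_inner (x y : E) : star (inner A x y) = inner A y x :=
  CStarModuleRight.star_inner x y

lemma inner_self_nonneg {x : E} : 0 ≤ inner A x x := CStarModuleRight.inner_self_nonneg

lemma inner_self {x : E} : inner A x x = 0 ↔ x = 0 := CStarModuleRight.inner_self

lemma inner_op_smul_right {a : A} {x y : E} : inner A x (y <• a) = inner A x y * a :=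
  CStarModuleRight.inner_op_smul_right

lemma inner_op_smul_left {a : A} {x y : E} : inner A (x <• a) y = star a * inner A x y := by
  rw [← star_inner y, inner_op_smul_right, star_mul, star_inner]

/-- `y ↦ ⟪x, y⟫` as a `ℂ`-linear map. -/
def innerₗ (x : E) : E →ₗ[ℂ] A where
  toFun y := inner A x y
  map_add' _ _ := CStarModuleRight.inner_add_right
  map_smul' _ _ := CStarModuleRight.inner_smul_right_complex

lemma inner_sub_right {x y z : E} : inner A x (y - z) = inner A x y - inner A x z :=
  map_sub (innerₗ (A := A) x) y z

lemma inner_sub_left {x y z : E} : inner A (x - y) z = inner A x z - inner A y z := by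
  rw [← star_inner z, inner_sub_right, star_sub, star_inner, star_inner]

lemma inner_zero_left {y : E} : inner A (0 : E) y = 0 := by
  have := inner_sub_left (A := A) (x := (0 : E)) (y := 0) (z := y)
  rwa [sub_self, sub_self] at this

lemma inner_smul_right_real {t : ℝ} {x y : E} : inner A x (t • y) = t • inner A x y := by
  rw [RCLike.real_smul_eq_coe_smul (K := ℂ) t y, CStarModuleRight.inner_smul_right_complex,
    ← RCLike.real_smul_eq_coe_smul (K := ℂ) t]

lemma inner_smul_left_real {t : ℝ} {x y : E} : inner A (t • x) y = t • inner A x y := by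
  rw [← star_inner y, inner_smul_right_real, star_smul, star_trivial, star_inner]

lemma norm_sq_eq {x : E} : ‖x‖ ^ 2 = ‖inner A x x‖ := by
  rw [CStarModuleRight.norm_eq_sqrt_norm_inner_self (A := A) x, Real.sq_sqrt (norm_nonneg _)]

lemma norm_inner_le [StarOrderedRing A] (x y : E) : ‖inner A x y‖ ≤ ‖x‖ * ‖y‖ := by
  rcases eq_or_ne x 0 with h | h
  · subst h
    rw [inner_zero_left, norm_zero, norm_zero, zero_mul]
  set a : A := inner A x y with ha
  set t : ℝ := ‖x‖ ^ 2 with ht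
  have htpos : 0 < t := by positivity
  have hsa : star a = inner A y x := star_inner x y
  have key : (0 : A) ≤ inner A (x <• a - t • y) (x <• a - t • y) := inner_self_nonneg
  have expand : inner A (x <• a - t • y) (x <• a - t • y)
      = star a * inner A x x * a - t • (star a * a) - t • (star a * a)
        + t • (t • inner A y y) := by
    rw [inner_sub_left, inner_sub_right, inner_sub_right, inner_op_smul_left,
      inner_op_smul_left, inner_op_smul_right, inner_op_smul_right, inner_smul_left_real,
      inner_smul_left_real, inner_smul_right_real, inner_smul_right_real, ← ha, ← hsa]
    simp only [mul_smul_comm, smul_mul_assoc, ← mul_assoc]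
    abel
  have hP : star a * inner A x x * a ≤ t • (star a * a) := by
    have := CStarAlgebra.star_left_conjugate_le_norm_smul (a := a) (b := inner A x x)
      (star_inner x x)
    rwa [← norm_sq_eq] at this
  rw [expand] at key
  have h2 : 0 ≤ t • (t • inner A y y) - t • (star a * a) := by
    calc (0 : A) ≤ star a * inner A x x * a - t • (star a * a) - t • (star a * a)
          + t • (t • inner A y y) := key
      _ ≤ t • (star a * a) - t • (star a * a) - t • (star a * a)
          + t • (t • inner A y y) := by gcongr
      _ = t • (t • inner A y y) - t • (star a * a) := by abel
  have h3 : star a * a ≤ t • inner A y y :=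
    (smul_le_smul_iff_of_pos_left htpos).mp (sub_nonneg.mp h2)
  have h4 : ‖a‖ ^ 2 ≤ (‖x‖ * ‖y‖) ^ 2 := by
    calc ‖a‖ ^ 2 = ‖star a * a‖ := by rw [CStarRing.norm_star_mul_self, sq]
      _ ≤ ‖t • inner A y y‖ :=
          CStarAlgebra.norm_le_norm_of_nonneg_of_le (star_mul_self_nonneg a) h3
      _ = t * ‖inner A y y‖ := by rw [norm_smul, Real.norm_of_nonneg htpos.le]
      _ = (‖x‖ * ‖y‖) ^ 2 := by rw [← norm_sq_eq, ht, mul_pow]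
  exact (pow_le_pow_iff_left₀ (norm_nonneg _) (by positivity) two_ne_zero).mp h4

/-- `y ↦ ⟪x, y⟫` as a continuous `ℂ`-linear map. -/
noncomputable def innerSL [StarOrderedRing A] (x : E) : E →L[ℂ] A :=
  (innerₗ (A := A) x).mkContinuous ‖x‖ (fun y => norm_inner_le x y)

lemma innerSL_apply [StarOrderedRing A] {x y : E} : innerSL (A := A) x y = inner A x y := rfl

end

end CSMR

section Key

variable {𝓐 : Type*} [CStarAlgebra 𝓐] [PartialOrder 𝓐] [StarOrderedRing 𝓐]

lemma real_algebraMap_nonneg' {t : ℝ} (ht : 0 ≤ t) : (0:𝓐) ≤ algebraMap ℝ 𝓐 t := by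
  have h1 : algebraMap ℝ 𝓐 t
      = star (algebraMap ℝ 𝓐 (Real.sqrt t)) * algebraMap ℝ 𝓐 (Real.sqrt t) := by
    have hstar : star (algebraMap ℝ 𝓐 (Real.sqrt t)) = algebraMap ℝ 𝓐 (Real.sqrt t) := by
      rw [Algebra.algebraMap_eq_smul_one, star_smul, star_trivial, star_one]
    rw [hstar, ← map_mul, Real.mul_self_sqrt ht]
  rw [h1]
  exact star_mul_self_nonneg _

lemma real_algebraMap_mono' {s t : ℝ} (h : s ≤ t) :
    (algebraMap ℝ 𝓐 s) ≤ algebraMap ℝ 𝓐 t := by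
  calc algebraMap ℝ 𝓐 s ≤ algebraMap ℝ 𝓐 s + algebraMap ℝ 𝓐 (t - s) :=
        le_add_of_nonneg_right (real_algebraMap_nonneg' (sub_nonneg.mpr h))
    _ = algebraMap ℝ 𝓐 t := by rw [← map_add]; ring_nf

lemma real_smul_nonneg' {t : ℝ} (ht : 0 ≤ t) {a : 𝓐} (ha : 0 ≤ a) : 0 ≤ t • a := by
  obtain ⟨s, hs⟩ : ∃ s : 𝓐, star s * s = a :=
    ⟨CFC.sqrt a, by rw [(IsSelfAdjoint.of_nonneg (CFC.sqrt_nonneg a)).star_eq,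
      CFC.sqrt_mul_sqrt_self a ha]⟩
  have h1 : t • a = star (Real.sqrt t • s) * (Real.sqrt t • s) := by
    rw [star_smul, star_trivial, smul_mul_smul_comm, Real.mul_self_sqrt ht, hs]
  rw [h1]
  exact star_mul_self_nonneg _

variable {H : Type*} [NormedAddCommGroup H] [NormedSpace ℂ H] [SMul 𝓐ᵐᵒᵖ H]
    [CStarModuleRight 𝓐 H]

omit [StarOrderedRing 𝓐] in
/-- An adjointable operator is module-linear. -/
lemma adjointable_op_smul (T Tadj : H →L[ℂ] H)
    (hT : ∀ x y : H, (inner 𝓐 (T x) y : 𝓐) = inner 𝓐 x (Tadj y))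
    (c : 𝓐) (u : H) : T (u <• c) = (T u) <• c := by
  have key : (inner 𝓐 (T (u <• c) - (T u) <• c) (T (u <• c) - (T u) <• c) : 𝓐) = 0 := by
    set d := T (u <• c) - (T u) <• c with hd
    have h1 : (inner 𝓐 (T (u <• c)) d : 𝓐) = inner 𝓐 ((T u) <• c) d := by
      rw [hT, CSMR.inner_op_smul_left, ← hT, CSMR.inner_op_smul_left]
    rw [CSMR.inner_sub_left, h1, sub_self]
  rw [CSMR.inner_self] at key
  exact sub_eq_zero.mp key

/-- Lance's inequality: `⟨Tx, Tx⟩ ≤ ‖T‖² ⟨x, x⟩` for adjointable `T`. -/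
lemma adjointable_inner_le (T Tadj : H →L[ℂ] H)
    (hT : ∀ x y : H, (inner 𝓐 (T x) y : 𝓐) = inner 𝓐 x (Tadj y)) (x : H) :
    (inner 𝓐 (T x) (T x) : 𝓐) ≤ (‖T‖^2 : ℝ) • (inner 𝓐 x x : 𝓐) := by
  rcases subsingleton_or_nontrivial 𝓐 with hsub | hnt
  · exact le_of_eq (Subsingleton.elim _ _)
  set z : 𝓐 := inner 𝓐 x x with hz
  set p : 𝓐 := inner 𝓐 (T x) (T x) with hp
  have hz0 : (0 : 𝓐) ≤ z := CSMR.inner_self_nonneg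
  have hp0 : (0 : 𝓐) ≤ p := CSMR.inner_self_nonneg
  set c : ℝ := ‖T‖ ^ 2 with hc
  have hcpos : 0 ≤ c := sq_nonneg _
  -- Step 1: for every ε > 0, `p ≤ c • z + (c * ε) • 1`.
  have step : ∀ ε : ℝ, 0 < ε → p ≤ c • z + (c * ε) • (1 : 𝓐) := by
    intro ε hε
    set w : 𝓐 := z + algebraMap ℝ 𝓐 ε with hw
    have hw0 : (0 : 𝓐) ≤ w := add_nonneg hz0 (real_algebraMap_nonneg' hε.le)
    have hw_sa : IsSelfAdjoint w := IsSelfAdjoint.of_nonneg hw0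
    have hspec : ∀ t ∈ spectrum ℝ w, ε ≤ t := by
      intro t ht
      rw [hw, ← spectrum.add_singleton_eq] at ht
      obtain ⟨s, hs, r, hr, hrs⟩ := Set.mem_add.mp ht
      rw [Set.mem_singleton_iff] at hr
      have := spectrum_nonneg_of_nonneg hz0 hs
      subst hr; linarith
    have hsqrt_pos : ∀ t ∈ spectrum ℝ w, (0:ℝ) < Real.sqrt t := fun t ht =>
      Real.sqrt_pos.mpr (lt_of_lt_of_le hε (hspec t ht))
    have hcont_r : ContinuousOn Real.sqrt (spectrum ℝ w) :=
      Real.continuous_sqrt.continuousOn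
    have hcont_e : ContinuousOn (fun t : ℝ => (Real.sqrt t)⁻¹) (spectrum ℝ w) :=
      ContinuousOn.inv₀ hcont_r (fun t ht => (hsqrt_pos t ht).ne')
    set e : 𝓐 := cfc (fun t : ℝ => (Real.sqrt t)⁻¹) w with he
    set r : 𝓐 := cfc Real.sqrt w with hr
    have he_sa : IsSelfAdjoint e := cfc_predicate _ w
    have hr_sa : IsSelfAdjoint r := cfc_predicate _ w
    have hre : r * e = 1 := by
      rw [hr, he, ← cfc_mul _ _ w hcont_r hcont_e]
      calc cfc (fun t : ℝ => Real.sqrt t * (Real.sqrt t)⁻¹) w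
          = cfc (fun _ : ℝ => (1:ℝ)) w := by
            apply cfc_congr; intro t ht
            exact mul_inv_cancel₀ (hsqrt_pos t ht).ne'
        _ = 1 := cfc_const_one ℝ w
    have her : e * r = 1 := by
      rw [he, hr, ← cfc_mul _ _ w hcont_e hcont_r]
      calc cfc (fun t : ℝ => (Real.sqrt t)⁻¹ * Real.sqrt t) w
          = cfc (fun _ : ℝ => (1:ℝ)) w := by
            apply cfc_congr; intro t ht
            exact inv_mul_cancel₀ (hsqrt_pos t ht).ne'
        _ = 1 := cfc_const_one ℝ w
    have hewe : e * w * e = 1 := by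
      conv_lhs => rw [← cfc_id ℝ w]
      rw [he, ← cfc_mul _ _ w hcont_e continuousOn_id, ← cfc_mul (fun x => (Real.sqrt x)⁻¹ * id x) _ w
        (hcont_e.mul continuousOn_id) hcont_e]
      calc cfc (fun t : ℝ => (Real.sqrt t)⁻¹ * t * (Real.sqrt t)⁻¹) w
          = cfc (fun _ : ℝ => (1:ℝ)) w := by
            apply cfc_congr; intro t ht
            have h1 : Real.sqrt t * Real.sqrt t = t :=
              Real.mul_self_sqrt (le_trans hε.le (hspec t ht))
            rw [← h1]
            field_simp
            rw [Real.sqrt_sq (Real.sqrt_nonneg t)]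
            exact div_self (pow_ne_zero 2 (hsqrt_pos t ht).ne')
        _ = 1 := cfc_const_one ℝ w
    have hrr : r * r = w := by
      rw [hr, ← cfc_mul _ _ w hcont_r hcont_r]
      calc cfc (fun t : ℝ => Real.sqrt t * Real.sqrt t) w
          = cfc (fun t : ℝ => t) w := by
            apply cfc_congr; intro t ht
            exact Real.mul_self_sqrt (le_trans hε.le (hspec t ht))
        _ = w := cfc_id' ℝ w
    -- the vector y = x <• e has norm at most 1
    set y : H := x <• e with hy
    have hyy : (inner 𝓐 y y : 𝓐) = e * z * e := by
      rw [hy, CSMR.inner_op_smul_left, CSMR.inner_op_smul_right,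
        he_sa.star_eq, ← hz, ← mul_assoc]
    have heze_nonneg : (0 : 𝓐) ≤ e * z * e := by
      have := star_left_conjugate_nonneg hz0 e
      rwa [he_sa.star_eq] at this
    have heze_le : e * z * e ≤ 1 := by
      have hze : z = w - algebraMap ℝ 𝓐 ε := by rw [hw, add_sub_cancel_right]
      have hee : (0:𝓐) ≤ e * e := by
        have := star_left_conjugate_nonneg (star_mul_self_nonneg (1:𝓐)) e
        simpa [he_sa.star_eq] using this
      have heq : e * z * e = 1 - (ε • (e * e)) := by
        rw [hze, mul_sub, sub_mul, hewe, Algebra.algebraMap_eq_smul_one]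
        rw [mul_smul_comm, smul_mul_assoc, mul_one]
      rw [heq]
      exact sub_le_self 1 (real_smul_nonneg' hε.le hee)
    have hnorm_y : ‖y‖ ≤ 1 := by
      have h1 : ‖y‖^2 = ‖(inner 𝓐 y y : 𝓐)‖ := CSMR.norm_sq_eq
      have h2 : ‖(inner 𝓐 y y : 𝓐)‖ ≤ 1 := by
        rw [hyy]
        calc ‖e * z * e‖ ≤ ‖(1:𝓐)‖ :=
              CStarAlgebra.norm_le_norm_of_nonneg_of_le heze_nonneg heze_le
          _ = 1 := norm_one
      nlinarith [norm_nonneg y, h1 ▸ h2]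
    -- q = ⟨Ty, Ty⟩ = e p e, with ‖q‖ ≤ c, hence q ≤ c • 1
    have hTy : T y = (T x) <• e := adjointable_op_smul T Tadj hT e x
    have hq_eq : (inner 𝓐 (T y) (T y) : 𝓐) = e * p * e := by
      rw [hy, hTy, CSMR.inner_op_smul_left, CSMR.inner_op_smul_right,
        he_sa.star_eq, ← hp, ← mul_assoc]
    have hq0 : (0:𝓐) ≤ e * p * e := by
      have := star_left_conjugate_nonneg hp0 e
      rwa [he_sa.star_eq] at this
    have hq_norm : ‖e * p * e‖ ≤ c := by
      rw [← hq_eq]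
      have h1 : ‖(inner 𝓐 (T y) (T y) : 𝓐)‖ = ‖T y‖^2 := CSMR.norm_sq_eq.symm
      rw [h1, hc]
      have h3 : ‖T y‖ ≤ ‖T‖ := by
        calc ‖T y‖ ≤ ‖T‖ * ‖y‖ := T.le_opNorm y
          _ ≤ ‖T‖ * 1 := mul_le_mul_of_nonneg_left hnorm_y (norm_nonneg T)
          _ = ‖T‖ := mul_one _
      nlinarith [norm_nonneg (T y), norm_nonneg T]
    have hq_le : e * p * e ≤ algebraMap ℝ 𝓐 c :=
      calc e * p * e ≤ algebraMap ℝ 𝓐 ‖e * p * e‖ :=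
            IsSelfAdjoint.le_algebraMap_norm_self (IsSelfAdjoint.of_nonneg hq0)
        _ ≤ algebraMap ℝ 𝓐 c := real_algebraMap_mono' hq_norm
    -- conjugate by r to recover p
    have hconj := star_left_conjugate_le_conjugate hq_le r
    rw [hr_sa.star_eq] at hconj
    have hlhs : r * (e * p * e) * r = p := by
      have : r * (e * p * e) * r = (r * e) * p * (e * r) := by
        simp only [mul_assoc]
      rw [this, hre, her, one_mul, mul_one]
    have hrhs : r * algebraMap ℝ 𝓐 c * r = c • w := by
      rw [Algebra.algebraMap_eq_smul_one, mul_smul_comm, smul_mul_assoc, mul_one, hrr]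
    rw [hlhs, hrhs] at hconj
    calc p ≤ c • w := hconj
      _ = c • z + (c * ε) • (1:𝓐) := by
          rw [hw, smul_add, Algebra.algebraMap_eq_smul_one, smul_smul]
  -- Step 2: take the limit ε → 0.
  have tend : Filter.Tendsto (fun n : ℕ => c • z + (c * (1/(n+1:ℝ))) • (1:𝓐))
      Filter.atTop (nhds (c • z)) := by
    have h1 : Filter.Tendsto (fun n : ℕ => (1:ℝ)/(n+1)) Filter.atTop (nhds 0) :=
      tendsto_one_div_add_atTop_nhds_zero_nat
    have h2 : Filter.Tendsto (fun n : ℕ => c * ((1:ℝ)/(n+1))) Filter.atTop (nhds 0) := by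
      simpa using h1.const_mul c
    have h3 : Filter.Tendsto (fun n : ℕ => (c * ((1:ℝ)/(n+1))) • (1:𝓐))
        Filter.atTop (nhds 0) := by
      simpa using h2.smul_const (1:𝓐)
    simpa using tendsto_const_nhds.add h3
  exact ge_of_tendsto' tend (fun n => step _ (by positivity))

end Key

/-- If `{Λ i}` is a `∗`-`K`-`g`-frame whose frame operator
`S f = ∑ᵢ Λᵢ* Λᵢ f` is invertible in `End*(H)`, then `{Λ i ∘ S⁻¹K}` is a dual
`∗`-`K`-`g`-frame of `{Λ i}`; in particular `K f = ∑ᵢ Λᵢ*(Λᵢ S⁻¹ K f)` for all `f`. -/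
theorem dual_star_K_g_frame_of_frame_operator
    {𝓐 : Type*} [CStarAlgebra 𝓐] [PartialOrder 𝓐] [StarOrderedRing 𝓐]
    {I : Type*} [Countable I]
    {H : Type*} [NormedAddCommGroup H] [NormedSpace ℂ H] [SMul 𝓐ᵐᵒᵖ H]
    [CStarModuleRight 𝓐 H] [CompleteSpace H]
    {Hi : I → Type*} [∀ i, NormedAddCommGroup (Hi i)] [∀ i, NormedSpace ℂ (Hi i)]
    [∀ i, SMul 𝓐ᵐᵒᵖ (Hi i)] [∀ i, CStarModuleRight 𝓐 (Hi i)] [∀ i, CompleteSpace (Hi i)]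
    -- `K` is an adjointable operator on `H` with adjoint `Kadj`
    (K Kadj : H →L[ℂ] H)
    (hK : ∀ x y : H, (inner 𝓐 (K x) y : 𝓐) = inner 𝓐 x (Kadj y))
    -- the family `Λ i ∈ End*(H, Hi i)` of adjointable operators
    (Λ : ∀ i, H →L[ℂ] Hi i) (Λadj : ∀ i, Hi i →L[ℂ] H)
    (hΛ : ∀ i (x : H) (y : Hi i), (inner 𝓐 (Λ i x) y : 𝓐) = inner 𝓐 x (Λadj i y))
    -- `{Λ i}` is a `∗`-`K`-`g`-frame with bounds `a`, `b`
    (a b : 𝓐) (ha : a ≠ 0) (hb : b ≠ 0)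
    (hsum : ∀ x : H, Summable fun i => (inner 𝓐 (Λ i x) (Λ i x) : 𝓐))
    (hlow : ∀ x : H,
      a * (inner 𝓐 (Kadj x) (Kadj x) : 𝓐) * star a ≤ ∑' i, (inner 𝓐 (Λ i x) (Λ i x) : 𝓐))
    (hup : ∀ x : H, ∑' i, (inner 𝓐 (Λ i x) (Λ i x) : 𝓐) ≤ b * (inner 𝓐 x x : 𝓐) * star b)
    -- the frame operator `S f = ∑ᵢ Λᵢ* Λᵢ f`, invertible in `End*(H)` with inverse `Sinv`
    (S Sinv : H →L[ℂ] H)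
    (hS : ∀ f : H, HasSum (fun i => Λadj i (Λ i f)) (S f))
    (hS₁ : S.comp Sinv = ContinuousLinearMap.id ℂ H)
    (hS₂ : Sinv.comp S = ContinuousLinearMap.id ℂ H) :
    -- `{Λ i ∘ S⁻¹K}` is a `∗`-g-Bessel sequence …
    ((∀ f : H, Summable fun i =>
        (inner 𝓐 (Λ i (Sinv (K f))) (Λ i (Sinv (K f))) : 𝓐)) ∧
      ∃ b' : 𝓐, b' ≠ 0 ∧ ∀ f : H,
        ∑' i, (inner 𝓐 (Λ i (Sinv (K f))) (Λ i (Sinv (K f))) : 𝓐) ≤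
          b' * (inner 𝓐 f f : 𝓐) * star b') ∧
    -- … which is a dual `∗`-`K`-`g`-frame of `{Λ i}`:  `K f = ∑ᵢ Λᵢ*(Λᵢ S⁻¹ K f)`
    ∀ f : H, HasSum (fun i => Λadj i (Λ i (Sinv (K f)))) (K f) := by
  have hSSinv : ∀ v : H, S (Sinv v) = v := fun v => by
    have := ContinuousLinearMap.ext_iff.mp hS₁ v
    simpa using this
  -- `S` is self-adjoint
  have hS_inner : ∀ u v : H, (inner 𝓐 u (S v) : 𝓐) = ∑' i, (inner 𝓐 (Λ i u) (Λ i v) : 𝓐) := by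
    intro u v
    have h := (hS v).mapL (CSMR.innerSL (A := 𝓐) u)
    have h' : HasSum (fun i => (inner 𝓐 (Λ i u) (Λ i v) : 𝓐)) (inner 𝓐 u (S v)) := by
      convert h using 2 with i
      rw [CSMR.innerSL_apply, hΛ]
      rfl
    exact h'.tsum_eq.symm
  have hS_sa : ∀ u v : H, (inner 𝓐 (S u) v : 𝓐) = inner 𝓐 u (S v) := by
    intro u v
    rw [← CSMR.star_inner v, hS_inner v u, hS_inner u v, tsum_star]
    exact tsum_congr fun i => by rw [CSMR.star_inner]
  have hSinv_sa : ∀ u v : H, (inner 𝓐 (Sinv u) v : 𝓐) = inner 𝓐 u (Sinv v) := by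
    intro u v
    calc (inner 𝓐 (Sinv u) v : 𝓐) = inner 𝓐 (Sinv u) (S (Sinv v)) := by rw [hSSinv v]
      _ = inner 𝓐 (S (Sinv u)) (Sinv v) := (hS_sa _ _).symm
      _ = inner 𝓐 u (Sinv v) := by rw [hSSinv u]
  set T : H →L[ℂ] H := Sinv.comp K with hTdef
  have hT_adj : ∀ x y : H, (inner 𝓐 (T x) y : 𝓐) = inner 𝓐 x ((Kadj.comp Sinv) y) := by
    intro x y
    calc (inner 𝓐 (T x) y : 𝓐) = inner 𝓐 (Sinv (K x)) y := rfl
      _ = inner 𝓐 (K x) (Sinv y) := hSinv_sa _ _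
      _ = inner 𝓐 x (Kadj (Sinv y)) := hK _ _
      _ = inner 𝓐 x ((Kadj.comp Sinv) y) := rfl
  refine ⟨⟨fun f => hsum _, ?_⟩, fun f => ?_⟩
  · -- the upper `∗`-g-Bessel bound
    set t : ℝ := ‖T‖ + 1 with ht
    have ht_pos : (0:ℝ) < t := by positivity
    refine ⟨((t : ℂ)) • b, smul_ne_zero (by exact_mod_cast ht_pos.ne') hb, fun f => ?_⟩
    have hTf : T f = Sinv (K f) := rfl
    have hX0 : (0:𝓐) ≤ b * (inner 𝓐 f f : 𝓐) * star b :=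
      star_right_conjugate_nonneg CSMR.inner_self_nonneg b
    calc ∑' i, (inner 𝓐 (Λ i (Sinv (K f))) (Λ i (Sinv (K f))) : 𝓐)
        ≤ b * (inner 𝓐 (Sinv (K f)) (Sinv (K f)) : 𝓐) * star b := hup _
      _ ≤ b * ((‖T‖^2 : ℝ) • (inner 𝓐 f f : 𝓐)) * star b := by
          refine star_right_conjugate_le_conjugate ?_ b
          rw [← hTf]
          exact adjointable_inner_le T (Kadj.comp Sinv) hT_adj f
      _ = (‖T‖^2 : ℝ) • (b * (inner 𝓐 f f : 𝓐) * star b) := by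
          rw [mul_smul_comm, smul_mul_assoc]
      _ ≤ (t * t : ℝ) • (b * (inner 𝓐 f f : 𝓐) * star b) := by
          have h1 : (0:𝓐) ≤ (t * t - ‖T‖^2 : ℝ) • (b * (inner 𝓐 f f : 𝓐) * star b) :=
            real_smul_nonneg' (by nlinarith [norm_nonneg T]) hX0
          have h2 : (t * t : ℝ) • (b * (inner 𝓐 f f : 𝓐) * star b)
              = (‖T‖^2 : ℝ) • (b * (inner 𝓐 f f : 𝓐) * star b)
                + (t * t - ‖T‖^2 : ℝ) • (b * (inner 𝓐 f f : 𝓐) * star b) := by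
            rw [← add_smul]; ring_nf
          rw [h2]
          exact le_add_of_nonneg_right h1
      _ = ((t : ℂ) • b) * (inner 𝓐 f f : 𝓐) * star ((t : ℂ) • b) := by
          have hstar : star ((t : ℂ) • b) = (t : ℂ) • star b := by
            rw [star_smul, Complex.star_def, Complex.conj_ofReal]
          rw [hstar]
          simp only [smul_mul_assoc, mul_smul_comm, smul_smul]
          rw [← Complex.coe_smul]
          congr 1
          push_cast; ring
  · -- the dual relation
    have h := hS (Sinv (K f))
    rwa [hSSinv (K f)] at h
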